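/- For 0 < γ < 1 and real non-integer μ, the expected value of the Dalap distribution p(n | μ, γ) = z^{-1} γ^{|n-μ|} on ℤ (with z = (γ^c+γ^f)/(1-γ), f = μ-⌊μ⌋, c = ⌈μ⌉-μ) equals (γ^f/(γ^f+γ^c))·(⌊μ⌋ − γ/(1-γ)) + (γ^c/(γ^f+γ^c))·(⌈μ⌉ + γ/(1-γ)). -/

import Mathlib

/-- Expected value of the unbounded Dalap distribution for non-integer `μ`:
with `f = μ-⌊μ⌋`, `c = ⌈μ⌉-μ` (where `⌈μ⌉ = ⌊μ⌋+1`), and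
`p(n) = ((1-γ)/(γ^f+γ^c)) γ^{|n-μ|}`,
`∑_n p(n)·n = (γ^f/(γ^f+γ^c))·(⌊μ⌋ − γ/(1-γ)) + (γ^c/(γ^f+γ^c))·(⌈μ⌉ + γ/(1-γ))`. -/
theorem dalap_expectation (γ μ : ℝ) (hγ0 : 0 < γ) (hγ1 : γ < 1)
    (hμ : ∀ m : ℤ, (m : ℝ) ≠ μ)
    (f c : ℝ) (hf : f = μ - ⌊μ⌋) (hc : c = (⌊μ⌋ : ℝ) + 1 - μ) :
    ∑' n : ℤ, ((1 - γ) / (γ ^ f + γ ^ c)) * γ ^ |(n : ℝ) - μ| * (n : ℝ)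
      = (γ ^ f / (γ ^ f + γ ^ c)) * ((⌊μ⌋ : ℝ) - γ / (1 - γ))
        + (γ ^ c / (γ ^ f + γ ^ c)) * (((⌊μ⌋ : ℝ) + 1) + γ / (1 - γ)) := by
  have hb : ((⌊μ⌋ : ℤ) : ℝ) ≤ μ := Int.floor_le μ
  have hb1 : μ < ((⌊μ⌋ : ℤ) : ℝ) + 1 := Int.lt_floor_add_one μ
  set b : ℤ := ⌊μ⌋ with hbdef
  set K : ℝ := (1 - γ) / (γ ^ f + γ ^ c) with hK
  set g : ℤ → ℝ := fun n => K * γ ^ |(n : ℝ) - μ| * n with hg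
  have h1γ : (0:ℝ) < 1 - γ := by linarith
  have hgeo : HasSum (fun k : ℕ => γ ^ k) (1 - γ)⁻¹ :=
    hasSum_geometric_of_lt_one hγ0.le hγ1
  have hmulgeo : HasSum (fun k : ℕ => (k:ℝ) * γ ^ k) (γ / (1 - γ)^2) :=
    hasSum_coe_mul_geometric_of_norm_lt_one
      (by rwa [Real.norm_eq_abs, abs_of_pos hγ0])
  -- the left tail
  have hS1 : HasSum (fun k : ℕ => g (b - k))
      (K * γ ^ f * ((b:ℝ) * (1-γ)⁻¹ - γ / (1-γ)^2)) := by
    have key : ∀ k : ℕ, g (b - k)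
        = (K * γ ^ f * (b:ℝ)) * γ ^ k - (K * γ ^ f) * ((k:ℝ) * γ ^ k) := by
      intro k
      have habs : |((b - (k:ℤ) : ℤ) : ℝ) - μ| = f + (k:ℝ) := by
        push_cast
        rw [abs_of_nonpos (by push_cast at hb ⊢; linarith [Nat.cast_nonneg (α := ℝ) k]), hf]
        push_cast
        ring
      have hr : γ ^ (f + (k:ℝ)) = γ ^ f * γ ^ k := by
        rw [Real.rpow_add hγ0, Real.rpow_natCast]
      simp only [hg, habs, hr]
      push_cast
      ring
    rw [funext key]
    have := (hgeo.mul_left (K * γ ^ f * (b:ℝ))).sub (hmulgeo.mul_left (K * γ ^ f))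
    convert this using 1
    rfl
    ring
  -- the right tail
  have hS2 : HasSum (fun k : ℕ => g (b + 1 + k))
      (K * γ ^ c * (((b:ℝ) + 1) * (1-γ)⁻¹ + γ / (1-γ)^2)) := by
    have key : ∀ k : ℕ, g (b + 1 + k)
        = (K * γ ^ c * ((b:ℝ) + 1)) * γ ^ k + (K * γ ^ c) * ((k:ℝ) * γ ^ k) := by
      intro k
      have habs : |((b + 1 + (k:ℤ) : ℤ) : ℝ) - μ| = c + (k:ℝ) := by
        push_cast
        rw [abs_of_nonneg (by push_cast at hb1 ⊢; linarith [Nat.cast_nonneg (α := ℝ) k]), hc]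
        push_cast
        ring
      have hr : γ ^ (c + (k:ℝ)) = γ ^ c * γ ^ k := by
        rw [Real.rpow_add hγ0, Real.rpow_natCast]
      simp only [hg, habs, hr]
      push_cast
      ring
    rw [funext key]
    have := (hgeo.mul_left (K * γ ^ c * ((b:ℝ) + 1))).add (hmulgeo.mul_left (K * γ ^ c))
    convert this using 1
    rfl
    ring
  -- combine over ℤ (shifted by b+1)
  have hZ : HasSum (fun m : ℤ => g ((b + 1) + m))
      (K * γ ^ c * (((b:ℝ) + 1) * (1-γ)⁻¹ + γ / (1-γ)^2)
        + K * γ ^ f * ((b:ℝ) * (1-γ)⁻¹ - γ / (1-γ)^2)) := by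
    refine HasSum.of_nat_of_neg_add_one ?_ ?_
    · exact hS2
    · have e : (fun k : ℕ => g (b + 1 + -((k:ℤ) + 1))) = fun k : ℕ => g (b - k) := by
        funext k; congr 1; omega
      exact e ▸ hS1
  have hG : HasSum g
      (K * γ ^ c * (((b:ℝ) + 1) * (1-γ)⁻¹ + γ / (1-γ)^2)
        + K * γ ^ f * ((b:ℝ) * (1-γ)⁻¹ - γ / (1-γ)^2)) := by
    have : (fun m : ℤ => g ((b + 1) + m)) = g ∘ (Equiv.addLeft (b + 1)) := rfl
    rw [this] at hZ
    exact (Equiv.hasSum_iff _).mp hZ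
  rw [hG.tsum_eq]
  have hD : 0 < γ ^ f + γ ^ c :=
    add_pos (Real.rpow_pos_of_pos hγ0 f) (Real.rpow_pos_of_pos hγ0 c)
  rw [hK]
  field_simp
  ring
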